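/- Let α > 0, k < 0, r = −3/(2k), and f(x) = −(1/|k|^{α+1}) ∫_{−1}^{kx+1/2} t(1/2−t)^α/√(1−t²) dt on [0,r]. Define the transformed profile f̂(ξ) = f(((α+1)ξ)^{1/(α+1)}). Then lim_{ξ→0⁺} f̂'(ξ) = lim_{x→0⁺} f'(x)/x^α = 1/√3; in particular the transformed profile meets the vertical axis at angle π/2 + π/6 = 2π/3. -/

import Mathlib

open Real Filter Set MeasureTheory intervalIntegral

noncomputable def gfun (α : ℝ) (t : ℝ) : ℝ := t * (1/2 - t) ^ α / Real.sqrt (1 - t^2)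

lemma gfun_meas (α : ℝ) : Measurable (gfun α) := by
  unfold gfun; fun_prop

lemma gfun_contAt (α : ℝ) (hα : 0 < α) {b : ℝ} (hb1 : -1 < b) (hb2 : b < 1) :
    ContinuousAt (gfun α) b := by
  have h1 : (0:ℝ) < 1 - b^2 := by nlinarith
  have hrp : ContinuousAt (fun t : ℝ => (1/2 - t) ^ α) b :=
    (Real.continuousAt_rpow_const _ α (Or.inr hα.le)).comp
      (continuousAt_const.sub continuousAt_id)
  have hden : ContinuousAt (fun t : ℝ => Real.sqrt (1 - t^2)) b :=
    ((continuousAt_const.sub ((continuousAt_id.pow 2)) : ContinuousAt (fun t : ℝ => 1 - t^2) b)).sqrt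
  exact (continuousAt_id.mul hrp).div hden (by positivity)

lemma gfun_intble (α : ℝ) (hα : 0 < α) {b : ℝ} (hb1 : -1 ≤ b) (hb2 : b < 1) :
    IntervalIntegrable (gfun α) volume (-1) b := by
  set C : ℝ := (3/2) ^ α / Real.sqrt (1 - b) with hC
  have hCpos : 0 < C :=
    div_pos (Real.rpow_pos_of_pos (by norm_num) _) (Real.sqrt_pos.mpr (by linarith))
  have hdom : IntervalIntegrable (fun t : ℝ => C * (t + 1) ^ (-(1/2) : ℝ)) volume (-1) b := by
    have h0 : IntervalIntegrable (fun s : ℝ => s ^ (-(1/2) : ℝ)) volume 0 (b+1) :=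
      intervalIntegral.intervalIntegrable_rpow' (by norm_num)
    have h1 := h0.comp_add_right 1
    simp only [zero_sub, add_sub_cancel_right] at h1
    exact h1.const_mul C
  refine hdom.mono_fun ((gfun_meas α).aestronglyMeasurable.restrict) ?_
  filter_upwards [ae_restrict_mem measurableSet_uIoc] with t ht
  rw [uIoc_of_le (by linarith)] at ht
  obtain ⟨ht1, ht2⟩ := ht
  have h1t : (0:ℝ) < 1 + t := by linarith
  have h1t' : (0:ℝ) < 1 - t := by linarith
  have hsqrt : Real.sqrt (1 - t^2) = Real.sqrt (1 - t) * Real.sqrt (1 + t) := by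
    rw [← Real.sqrt_mul (by linarith)]; ring_nf
  have hrw : (t + 1 : ℝ) ^ (-(1/2) : ℝ) = (Real.sqrt (1 + t))⁻¹ := by
    rw [Real.rpow_neg (by linarith), Real.sqrt_eq_rpow, add_comm]
  have hnum : |t * (1/2 - t) ^ α| ≤ (3/2) ^ α := by
    rw [abs_mul]
    have h2 : |t| ≤ 1 := by rw [abs_le]; constructor <;> linarith
    calc |t| * |(1/2 - t : ℝ) ^ α| ≤ 1 * |1/2 - t| ^ α := by
          apply mul_le_mul h2 (Real.abs_rpow_le_abs_rpow _ _) (abs_nonneg _) zero_le_one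
      _ ≤ 1 * (3/2 : ℝ) ^ α := by
          apply mul_le_mul_of_nonneg_left
            (Real.rpow_le_rpow (abs_nonneg _) (abs_le.mpr ⟨by linarith, by linarith⟩) hα.le)
            zero_le_one
      _ = (3/2 : ℝ) ^ α := one_mul _
  show ‖gfun α t‖ ≤ ‖C * (t + 1) ^ (-(1/2) : ℝ)‖
  rw [Real.norm_eq_abs, Real.norm_eq_abs, hrw,
    abs_of_nonneg (mul_nonneg hCpos.le (inv_nonneg.mpr (Real.sqrt_nonneg _)))]
  unfold gfun
  rw [abs_div, abs_of_nonneg (Real.sqrt_nonneg _), hsqrt, div_le_iff₀ (by positivity), hC]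
  have hsb : Real.sqrt (1 - b) ≤ Real.sqrt (1 - t) := Real.sqrt_le_sqrt (by linarith)
  have hne : Real.sqrt (1+t) ≠ 0 := (Real.sqrt_pos.mpr h1t).ne'
  have hne' : Real.sqrt (1-b) ≠ 0 := (Real.sqrt_pos.mpr (by linarith)).ne'
  have hkey : (3/2:ℝ)^α / Real.sqrt (1-b) * (Real.sqrt (1+t))⁻¹ * (Real.sqrt (1-t) * Real.sqrt (1+t))
      = (3/2:ℝ)^α * (Real.sqrt (1-t) / Real.sqrt (1-b)) := by
    field_simp
  rw [hkey]
  calc |t * (1/2 - t) ^ α| ≤ (3/2)^α := hnum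
    _ = (3/2:ℝ)^α * 1 := (mul_one _).symm
    _ ≤ _ := by
        apply mul_le_mul_of_nonneg_left _ (Real.rpow_nonneg (by norm_num) _)
        rw [le_div_iff₀ (Real.sqrt_pos.mpr (by linarith))]; simpa using hsb

theorem transformed_profile_angle (α k : ℝ) (hα : 0 < α) (hk : k < 0)
    (r : ℝ) (hr : r = -3 / (2 * k))
    (f : ℝ → ℝ)
    (hf : ∀ x, f x = -(1 / |k| ^ (α + 1)) *
      ∫ t in (-1 : ℝ)..(k * x + 1 / 2),
        t * (1 / 2 - t) ^ α / Real.sqrt (1 - t ^ 2))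
    (fhat : ℝ → ℝ)
    (hfhat : ∀ ξ, fhat ξ = f (((α + 1) * ξ) ^ (1 / (α + 1)))) :
    Filter.Tendsto (deriv fhat) (nhdsWithin 0 (Set.Ioi 0))
        (nhds (1 / Real.sqrt 3)) ∧
      Filter.Tendsto (fun x => deriv f x / x ^ α) (nhdsWithin 0 (Set.Ioi 0))
        (nhds (1 / Real.sqrt 3)) ∧
      Real.pi / 2 + Real.arctan (1 / Real.sqrt 3) = 2 * Real.pi / 3 := by
  have hk0 : k ≠ 0 := hk.ne
  have hkabs : |k| = -k := abs_of_neg hk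
  have hkabs_pos : (0:ℝ) < |k| := abs_pos.mpr hk0
  have hr0 : 0 < r := by
    rw [hr, div_pos_iff]; right; constructor <;> linarith
  set φ : ℝ → ℝ := fun x => (k * x + 1/2) / Real.sqrt (1 - (k * x + 1/2)^2) with hφ
  -- derivative of f on Ioo 0 r
  have hfd : ∀ x ∈ Ioo 0 r, HasDerivAt f (x ^ α * φ x) x := by
    rintro x ⟨hx1, hx2⟩
    set b := k * x + 1/2 with hb
    have hb1 : -1 < b := by
      have : k * x > k * r := by exact mul_lt_mul_of_neg_left hx2 hk
      have hkr : k * r = -3/2 := by rw [hr]; field_simp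
      simp only [hb]; nlinarith
    have hb2 : b < 1 := by
      have : k * x < 0 := mul_neg_of_neg_of_pos hk hx1
      simp only [hb]; linarith
    have hbsq : (0:ℝ) < 1 - b^2 := by nlinarith
    have hS : (0:ℝ) < Real.sqrt (1 - b^2) := Real.sqrt_pos.mpr hbsq
    have hF : HasDerivAt (fun y => ∫ t in (-1:ℝ)..y, gfun α t) (gfun α b) b :=
      intervalIntegral.integral_hasDerivAt_right (gfun_intble α hα hb1.le hb2)
        ((gfun_meas α).aestronglyMeasurable.stronglyMeasurableAtFilter)
        (gfun_contAt α hα hb1 hb2)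
    have hu : HasDerivAt (fun y : ℝ => k * y + 1/2) k x := by
      simpa using ((hasDerivAt_id x).const_mul k).add_const (1/2)
    have hcomp := (hF.comp x hu).const_mul (-(1 / |k| ^ (α + 1)))
    have hfeq : f = fun y => -(1 / |k| ^ (α + 1)) * ∫ t in (-1:ℝ)..(k * y + 1/2), gfun α t := by
      funext y; rw [hf y]; rfl
    simp only [Function.comp] at hcomp
    rw [← hfeq] at hcomp
    refine hcomp.congr_deriv (Eq.symm ?_)
    -- value equality
    have h12 : (1:ℝ)/2 - b = |k| * x := by rw [hkabs]; simp only [hb]; ring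
    have hmul : (|k| * x) ^ α = |k| ^ α * x ^ α := Real.mul_rpow (abs_nonneg k) hx1.le
    have hK : |k| ^ (α + 1) = |k| ^ α * (-k) := by
      rw [Real.rpow_add_one (ne_of_gt hkabs_pos), hkabs]
    have hKα : (0:ℝ) < |k| ^ α := Real.rpow_pos_of_pos hkabs_pos α
    rw [hφ]
    show x ^ α * (b / Real.sqrt (1 - b^2)) = -(1 / |k| ^ (α + 1)) * (gfun α b * k)
    unfold gfun
    rw [h12, hmul, hK]
    field_simp
  -- limit of φ at 0
  have hsqrt34 : Real.sqrt (1 - (k * 0 + 1/2)^2) = Real.sqrt 3 / 2 := by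
    rw [show (1 - (k * 0 + 1/2)^2 : ℝ) = 3/4 by ring,
      show (3/4:ℝ) = (Real.sqrt 3 / 2)^2 by
        rw [div_pow, Real.sq_sqrt (by norm_num : (0:ℝ) ≤ 3)]; norm_num,
      Real.sqrt_sq (by positivity)]
  have h3ne : Real.sqrt 3 ≠ 0 := by positivity
  have hφ0 : φ 0 = 1 / Real.sqrt 3 := by
    rw [hφ]; simp only []
    rw [hsqrt34, show (k * 0 + 1/2 : ℝ) = 1/2 by ring]
    field_simp
  have hφcont : ContinuousAt φ 0 := by
    apply ContinuousAt.div
    · fun_prop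
    · fun_prop
    · rw [hsqrt34]; positivity
  have hφtendsto : Tendsto φ (nhdsWithin 0 (Ioi 0)) (nhds (1 / Real.sqrt 3)) := by
    rw [← hφ0]
    exact hφcont.continuousWithinAt.tendsto
  refine ⟨?_, ?_, ?_⟩
  · -- fhat part
    set ξ0 := r ^ (α + 1) / (α + 1) with hξ0
    have hα1 : (0:ℝ) < α + 1 := by linarith
    have hξ0pos : 0 < ξ0 := div_pos (Real.rpow_pos_of_pos hr0 _) hα1
    have hmem : Ioo (0:ℝ) ξ0 ∈ nhdsWithin 0 (Ioi 0) :=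
      Ioo_mem_nhdsGT_of_mem ⟨le_refl _, hξ0pos⟩
    set X : ℝ → ℝ := fun ξ => ((α + 1) * ξ) ^ (1 / (α + 1)) with hX
    have hXd : ∀ ξ ∈ Ioo (0:ℝ) ξ0, deriv fhat ξ = φ (X ξ) := by
      rintro ξ ⟨hξ1, hξ2⟩
      have hmpos : 0 < (α + 1) * ξ := mul_pos hα1 hξ1
      have hXpos : 0 < X ξ := Real.rpow_pos_of_pos hmpos _
      have hXlt : X ξ < r := by
        have h1 : (α + 1) * ξ < r ^ (α + 1) := by
          rw [hξ0, lt_div_iff₀ hα1] at hξ2; linarith [hξ2]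
        have h2 : ((α+1)*ξ) ^ (1/(α+1)) < (r ^ (α+1)) ^ (1/(α+1)) :=
          Real.rpow_lt_rpow hmpos.le h1 (by positivity)
        have h3 : (r ^ (α+1)) ^ (1/(α+1)) = r := by
          rw [← Real.rpow_mul hr0.le, mul_one_div_cancel hα1.ne', Real.rpow_one]
        rw [hX]; rw [h3] at h2; exact h2
      have hXder : HasDerivAt X ((1/(α+1)) * ((α+1)*ξ) ^ (1/(α+1) - 1) * (α+1)) ξ := by
        have hm : HasDerivAt (fun ξ : ℝ => (α + 1) * ξ) (α + 1) ξ := by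
          simpa using (hasDerivAt_id ξ).const_mul (α + 1)
        exact (Real.hasDerivAt_rpow_const (p := 1/(α+1)) (Or.inl hmpos.ne')).comp ξ hm
      have hfX := hfd (X ξ) ⟨hXpos, hXlt⟩
      have hcomp := hfX.comp ξ hXder
      have hfhateq : f ∘ X = fhat := by
        funext z; rw [Function.comp_apply, hX]; exact (hfhat z).symm
      rw [hfhateq] at hcomp
      have hval : (X ξ) ^ α * φ (X ξ) * ((1/(α+1)) * ((α+1)*ξ) ^ (1/(α+1) - 1) * (α+1))
          = φ (X ξ) := by
        have e1 : (X ξ) ^ α = ((α+1)*ξ) ^ ((1/(α+1)) * α) := by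
          rw [hX, ← Real.rpow_mul hmpos.le]
        have e2 : ((α+1)*ξ) ^ ((1/(α+1)) * α) * ((α+1)*ξ) ^ (1/(α+1) - 1)
            = ((α+1)*ξ) ^ ((1/(α+1)) * α + (1/(α+1) - 1)) := (Real.rpow_add hmpos _ _).symm
        have e3 : (1/(α+1)) * α + (1/(α+1) - 1) = 0 := by field_simp; ring
        rw [e1]
        calc ((α+1)*ξ) ^ ((1/(α+1)) * α) * φ (X ξ) * ((1/(α+1)) * ((α+1)*ξ) ^ (1/(α+1) - 1) * (α+1))
            = (((α+1)*ξ) ^ ((1/(α+1)) * α) * ((α+1)*ξ) ^ (1/(α+1) - 1)) * φ (X ξ)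
              * ((1/(α+1)) * (α+1)) := by ring
          _ = φ (X ξ) := by
              rw [e2, e3, Real.rpow_zero, one_mul, one_div,
                inv_mul_cancel₀ hα1.ne', mul_one]
      rw [hcomp.deriv, hval]
    have hXtendsto : Tendsto X (nhdsWithin 0 (Ioi 0)) (nhds 0) := by
      have hc : ContinuousAt X 0 := by
        rw [hX]
        exact (continuousAt_const.mul continuousAt_id).rpow_const
          (Or.inr (by positivity))
      have hX0 : X 0 = 0 := by
        rw [hX]; simp only [mul_zero]
        exact Real.zero_rpow (by positivity)
      have h' : Tendsto X (nhdsWithin 0 (Ioi 0)) (nhds (X 0)) :=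
        hc.continuousWithinAt.tendsto
      rw [hX0] at h'; exact h'
    have hcompT : Tendsto (φ ∘ X) (nhdsWithin 0 (Ioi 0)) (nhds (1 / Real.sqrt 3)) := by
      rw [← hφ0]; exact hφcont.tendsto.comp hXtendsto
    refine Tendsto.congr' ?_ hcompT
    filter_upwards [hmem] with ξ hξ
    exact (hXd ξ hξ).symm
  · -- deriv f part
    have hmem : Ioo (0:ℝ) r ∈ nhdsWithin 0 (Ioi 0) :=
      Ioo_mem_nhdsGT_of_mem ⟨le_refl _, hr0⟩
    apply hφtendsto.congr'
    filter_upwards [hmem] with x hx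
    have hd := hfd x hx
    rw [hd.deriv, mul_comm, mul_div_assoc,
      div_self (Real.rpow_pos_of_pos hx.1 α).ne', mul_one]
  · -- angle part
    have ht : Real.tan (Real.pi / 6) = 1 / Real.sqrt 3 := by
      rw [Real.tan_eq_sin_div_cos, Real.sin_pi_div_six, Real.cos_pi_div_six]
      field_simp
    have ha : Real.arctan (1 / Real.sqrt 3) = Real.pi / 6 := by
      rw [← ht, Real.arctan_tan (by linarith [Real.pi_pos]) (by linarith [Real.pi_pos])]
    rw [ha]; ring
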